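/- arXiv:1305.5941 — 2 statements merged into one kernel-verified Lean document; each statement's English description precedes it below -/
import Mathlib

section
/- For every bipartite state ρ of dimension m×n, the infimum defining the entanglement of formation is unchanged if the ensembles are restricted to have at most m²n² members: E_F(ρ) equals the infimum of Σ_{i=1}^{m²n²} p_i S(tr_B(ψ_i ψ_i*)) over all families (p_i, ψ_i)_{i=1}^{m²n²} with ψ_i ∈ ℂ^m⊗ℂ^n unit vectors, p_i ≥ 0, and Σ_{i=1}^{m²n²} p_i ψ_i ψ_i* = ρ. -/
open scoped Kronecker ComplexOrder Matrix

noncomputable section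

/-- A quantum state (density matrix): positive semidefinite with trace 1. -/
def IsState {α : Type*} [Fintype α] (ρ : Matrix α α ℂ) : Prop :=
  ρ.PosSemidef ∧ ρ.trace = 1

/-- The rank-one matrix `ψ ψ*`. -/
def vecState {α : Type*} (ψ : α → ℂ) : Matrix α α ℂ :=
  fun i j => ψ i * star (ψ j)

/-- Kronecker product of two vectors. -/
def kronVec {α β : Type*} (a : α → ℂ) (b : β → ℂ) : α × β → ℂ :=
  fun p => a p.1 * b p.2

/-- Partial trace over the first tensor factor. -/
def ptrace1 {α β : Type*} [Fintype α] (M : Matrix (α × β) (α × β) ℂ) : Matrix β β ℂ :=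
  fun k k' => ∑ i, M (i, k) (i, k')

/-- Partial trace over the second tensor factor. -/
def ptrace2 {α β : Type*} [Fintype β] (M : Matrix (α × β) (α × β) ℂ) : Matrix α α ℂ :=
  fun i i' => ∑ k, M (i, k) (i', k)

/-- Partial trace over the third factor of a triple tensor product. -/
def ptrace3 {α β γ : Type*} [Fintype γ]
    (M : Matrix (α × β × γ) (α × β × γ) ℂ) : Matrix (α × β) (α × β) ℂ :=
  fun p q => ∑ t, M (p.1, (p.2, t)) (q.1, (q.2, t))

/-- Partial trace over the middle factor of a triple tensor product. -/
def ptraceMid {α β γ : Type*} [Fintype β]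
    (M : Matrix (α × β × γ) (α × β × γ) ℂ) : Matrix (α × γ) (α × γ) ℂ :=
  fun p q => ∑ k, M (p.1, (k, p.2)) (q.1, (k, q.2))

/-- Partial trace over the primed (A' and B') factors of a state on (A⊗A')⊗(B⊗B'). -/
def ptracePrimes {α α' β β' : Type*} [Fintype α'] [Fintype β']
    (M : Matrix ((α × α') × β × β') ((α × α') × β × β') ℂ) : Matrix (α × β) (α × β) ℂ :=
  fun p q => ∑ s, ∑ t, M ((p.1, s), (p.2, t)) ((q.1, s), (q.2, t))

/-- Partial trace over the unprimed (A and B) factors of a state on (A⊗A')⊗(B⊗B'). -/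
def ptraceUnprimed {α α' β β' : Type*} [Fintype α] [Fintype β]
    (M : Matrix ((α × α') × β × β') ((α × α') × β × β') ℂ) : Matrix (α' × β') (α' × β') ℂ :=
  fun p q => ∑ i, ∑ k, M ((i, p.1), (k, p.2)) ((i, q.1), (k, q.2))

/-- Von Neumann entropy: `S(ρ) = -∑ λᵢ log λᵢ` where λᵢ are the eigenvalues. -/
def vnEntropy {α : Type*} [Fintype α] [DecidableEq α] (ρ : Matrix α α ℂ) : ℝ :=
  if h : ρ.IsHermitian then ∑ i, Real.negMulLog (h.eigenvalues i) else 0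

/-- Entanglement of formation. -/
def EoF {α β : Type*} [Fintype α] [Fintype β] [DecidableEq α]
    (ρ : Matrix (α × β) (α × β) ℂ) : ℝ :=
  sInf {x : ℝ | ∃ (k : ℕ) (p : Fin k → ℝ) (ψ : Fin k → α × β → ℂ),
    (∀ i, 0 ≤ p i) ∧ (∀ i, star (ψ i) ⬝ᵥ ψ i = 1) ∧
    (∑ i, (p i : ℂ) • vecState (ψ i)) = ρ ∧
    x = ∑ i, p i * vnEntropy (ptrace2 (vecState (ψ i)))}

/-- Separability of a bipartite state. -/
def IsSepState {α β : Type*} [Fintype α] [Fintype β]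
    (ρ : Matrix (α × β) (α × β) ℂ) : Prop :=
  ∃ (k : ℕ) (p : Fin k → ℝ) (a : Fin k → α → ℂ) (b : Fin k → β → ℂ),
    (∀ i, 0 ≤ p i) ∧ (∑ i, p i) = 1 ∧
    (∀ i, star (a i) ⬝ᵥ a i = 1) ∧ (∀ i, star (b i) ⬝ᵥ b i = 1) ∧
    ρ = ∑ i, (p i : ℂ) • (vecState (a i) ⊗ₖ vecState (b i))

/-- Classical-classical bipartite states. -/
def IsCC {α β : Type*} [Fintype α] [Fintype β] [DecidableEq α] [DecidableEq β]
    (ρ : Matrix (α × β) (α × β) ℂ) : Prop :=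
  ∃ (a : α → α → ℂ) (b : β → β → ℂ) (p : α → β → ℝ),
    (∀ i j, star (a i) ⬝ᵥ a j = if i = j then 1 else 0) ∧
    (∀ i j, star (b i) ⬝ᵥ b j = if i = j then 1 else 0) ∧
    (∀ i j, 0 ≤ p i j) ∧ (∑ i, ∑ j, p i j) = 1 ∧
    ρ = ∑ i, ∑ j, (p i j : ℂ) • (vecState (a i) ⊗ₖ vecState (b j))

/-- Quantum-classical bipartite states (classical on the second factor). -/
def IsQC {α β : Type*} [Fintype α] [Fintype β] [DecidableEq β]
    (ρ : Matrix (α × β) (α × β) ℂ) : Prop :=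
  ∃ (b : β → β → ℂ) (σ : β → Matrix α α ℂ) (p : β → ℝ),
    (∀ i j, star (b i) ⬝ᵥ b j = if i = j then 1 else 0) ∧
    (∀ i, IsState (σ i)) ∧ (∀ i, 0 ≤ p i) ∧ (∑ i, p i) = 1 ∧
    ρ = ∑ i, (p i : ℂ) • (σ i ⊗ₖ vecState (b i))

/-- A POVM: finitely many positive semidefinite operators summing to the identity. -/
def IsPOVM {γ : Type*} [Fintype γ] [DecidableEq γ] {k : ℕ}
    (P : Fin k → Matrix γ γ ℂ) : Prop :=
  (∀ i, (P i).PosSemidef) ∧ (∑ i, P i) = 1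

/-- A von Neumann measurement: pairwise-orthogonal orthogonal projections summing to I. -/
def IsVNMeas {γ : Type*} [Fintype γ] [DecidableEq γ] {k : ℕ}
    (P : Fin k → Matrix γ γ ℂ) : Prop :=
  (∀ i, (P i).IsHermitian) ∧ (∀ i, P i * P i = P i) ∧
  (∀ i j, i ≠ j → P i * P j = 0) ∧ (∑ i, P i) = 1

/-- The term `pᵢ S(ρ_A^i)` for a measurement operator `P` on the second subsystem,
with the convention that the term vanishes when `pᵢ = 0`. -/
def measTerm {α β : Type*} [Fintype α] [Fintype β] [DecidableEq α] [DecidableEq β]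
    (ρ : Matrix (α × β) (α × β) ℂ) (P : Matrix β β ℂ) : ℝ :=
  if _h : (Matrix.trace (ρ * ((1 : Matrix α α ℂ) ⊗ₖ P))).re = 0 then 0
  else (Matrix.trace (ρ * ((1 : Matrix α α ℂ) ⊗ₖ P))).re *
    vnEntropy ((((Matrix.trace (ρ * ((1 : Matrix α α ℂ) ⊗ₖ P))).re : ℂ))⁻¹ •
      ptrace2 (ρ * ((1 : Matrix α α ℂ) ⊗ₖ P)))

/-- Quantum discord with POVM measurements on the second subsystem. -/
def discordP {α β : Type*} [Fintype α] [Fintype β] [DecidableEq α] [DecidableEq β]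
    (ρ : Matrix (α × β) (α × β) ℂ) : ℝ :=
  vnEntropy (ptrace1 ρ) - vnEntropy ρ +
    sInf {x : ℝ | ∃ (k : ℕ) (P : Fin k → Matrix β β ℂ),
      IsPOVM P ∧ x = ∑ i, measTerm ρ (P i)}

/-- Quantum discord with von Neumann measurements on the second subsystem. -/
def discordN {α β : Type*} [Fintype α] [Fintype β] [DecidableEq α] [DecidableEq β]
    (ρ : Matrix (α × β) (α × β) ℂ) : ℝ :=
  vnEntropy (ptrace1 ρ) - vnEntropy ρ +
    sInf {x : ℝ | ∃ (k : ℕ) (P : Fin k → Matrix β β ℂ),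
      IsVNMeas P ∧ x = ∑ i, measTerm ρ (P i)}

/-- The trace norm `‖X‖₁ = tr √(X* X)`. -/
def traceNorm {α : Type*} [Fintype α] [DecidableEq α] (X : Matrix α α ℂ) : ℝ :=
  ((Matrix.posSemidef_conjTranspose_mul_self X).1.eigenvectorUnitary.1 *
    Matrix.diagonal (((↑) : ℝ → ℂ) ∘ Real.sqrt ∘ (Matrix.posSemidef_conjTranspose_mul_self X).1.eigenvalues) *
    (star (Matrix.posSemidef_conjTranspose_mul_self X).1.eigenvectorUnitary : Matrix α α ℂ)).trace.re

/-- The Frobenius norm `‖X‖₂ = √(tr (X* X))`. -/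
def frobNorm {α β : Type*} [Fintype α] [Fintype β] (X : Matrix α β ℂ) : ℝ :=
  Real.sqrt (Matrix.trace (Xᴴ * X)).re

/-- Matrix logarithm taken on the support (eigenvalue 0 is sent to 0). -/
def matLog {α : Type*} [Fintype α] [DecidableEq α] (A : Matrix α α ℂ) : Matrix α α ℂ :=
  if h : A.IsHermitian then
    (Matrix.IsHermitian.eigenvectorUnitary h : Matrix α α ℂ) *
      Matrix.diagonal (fun i => if h.eigenvalues i = 0 then 0
        else (Real.log (h.eigenvalues i) : ℂ)) *
      (star (Matrix.IsHermitian.eigenvectorUnitary h) : Matrix α α ℂ)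
  else 0

end
namespace EofAux

open Finset

lemma real_smul_mat {α : Type*} (r : ℝ) (A : Matrix α α ℂ) : r • A = (r : ℂ) • A := by
  ext i j
  simp [Matrix.smul_apply, Complex.real_smul]

lemma vecState_isHermitian {α : Type*} (ψ : α → ℂ) : (vecState ψ).IsHermitian := by
  ext i j
  simp [Matrix.conjTranspose_apply, vecState, mul_comm]

lemma trace_vecState {α : Type*} [Fintype α] (ψ : α → ℂ) :
    (vecState ψ).trace = star ψ ⬝ᵥ ψ := by
  simp [Matrix.trace, Matrix.diag, vecState, dotProduct, mul_comm]

lemma herm_dep {α : Type*} [Fintype α] [DecidableEq α] {k : ℕ}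
    (hk : Fintype.card α ^ 2 < k) (M : Fin k → Matrix α α ℂ)
    (hM : ∀ i, (M i).IsHermitian) :
    ∃ c : Fin k → ℝ, (∃ i, c i ≠ 0) ∧ ∑ i, c i • M i = 0 := by
  classical
  let e := Fintype.equivFin α
  let L : Matrix α α ℂ →ₗ[ℝ] (α × α → ℝ) :=
    { toFun := fun A p => if e p.1 ≤ e p.2 then (A p.1 p.2).re else (A p.1 p.2).im
      map_add' := by
        intro A B; funext pr
        by_cases h : e pr.1 ≤ e pr.2 <;> simp [h, Matrix.add_apply]
      map_smul' := by
        intro r A; funext pr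
        by_cases h : e pr.1 ≤ e pr.2 <;>
          simp [h, Matrix.smul_apply, Complex.smul_re, Complex.smul_im] }
  have hLinj : ∀ A : Matrix α α ℂ, A.IsHermitian → L A = 0 → A = 0 := by
    intro A hA hLA
    ext i j
    have hij := congrFun hLA (i, j)
    have hji := congrFun hLA (j, i)
    simp only [L, LinearMap.coe_mk, AddHom.coe_mk, Pi.zero_apply] at hij hji
    have hconj : star (A j i) = A i j := hA.apply i j
    by_cases hle : e i ≤ e j
    · rw [if_pos hle] at hij
      by_cases hle' : e j ≤ e i
      · have hij' : i = j := e.injective (le_antisymm hle hle')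
        subst hij'
        have him : (A i i).im = 0 := by
          have := congrArg Complex.im hconj
          simp at this
          linarith
        exact Complex.ext hij him
      · rw [if_neg hle'] at hji
        have him : (A i j).im = 0 := by
          have := congrArg Complex.im hconj
          simp at this
          linarith
        exact Complex.ext hij him
    · rw [if_neg hle] at hij
      have hle' : e j ≤ e i := le_of_not_ge hle
      rw [if_pos hle'] at hji
      have hre : (A i j).re = 0 := by
        have := congrArg Complex.re hconj
        simp at this
        linarith
      exact Complex.ext hre hij
  have hnotli : ¬ LinearIndependent ℝ (fun i => L (M i)) := by
    intro hli
    have h1 := hli.fintype_card_le_finrank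
    rw [Module.finrank_pi, Fintype.card_fin, Fintype.card_prod] at h1
    rw [pow_two] at hk
    omega
  obtain ⟨g, hg0, i₀, hgi⟩ := Fintype.not_linearIndependent_iff.mp hnotli
  refine ⟨g, ⟨i₀, hgi⟩, ?_⟩
  apply hLinj
  · show (∑ i, g i • M i)ᴴ = ∑ i, g i • M i
    rw [Matrix.conjTranspose_sum]
    refine Finset.sum_congr rfl fun i _ => ?_
    rw [real_smul_mat, Matrix.conjTranspose_smul, (hM i).eq, Complex.star_def,
      Complex.conj_ofReal]
  · rw [map_sum]
    simp only [map_smul]; exact hg0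

lemma pad_sum {M : Type*} [AddCommMonoid M] {k N : ℕ} (h : k ≤ N)
    (F : Fin k → M) (G : Fin N → M)
    (hG : ∀ (i : Fin N) (hi : (i : ℕ) < k), G i = F ⟨i, hi⟩)
    (hG0 : ∀ i : Fin N, ¬((i : ℕ) < k) → G i = 0) :
    ∑ i, G i = ∑ i, F i := by
  classical
  have h1 : ∑ i, G i = ∑ i ∈ Finset.univ.map (Fin.castLEEmb h), G i := by
    refine (Finset.sum_subset (Finset.subset_univ _) fun x _ hx => ?_).symm
    refine hG0 x fun hlt => hx ?_
    exact Finset.mem_map.mpr ⟨⟨x, hlt⟩, Finset.mem_univ _, by ext; rfl⟩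
  rw [h1, Finset.sum_map]
  refine Finset.sum_congr rfl fun j _ => ?_
  have hj : ((Fin.castLEEmb h) j : ℕ) < k := by
    simpa using j.2
  rw [hG _ hj]
  exact congrArg F (Fin.ext rfl)

lemma reduce (m n : ℕ) (hne : Nonempty (Fin m × Fin n))
    (ρ : Matrix (Fin m × Fin n) (Fin m × Fin n) ℂ) :
    ∀ (k : ℕ) (p : Fin k → ℝ) (ψ : Fin k → (Fin m × Fin n) → ℂ),
      (∀ i, 0 ≤ p i) → (∀ i, star (ψ i) ⬝ᵥ ψ i = 1) →
      (∑ i, (p i : ℂ) • vecState (ψ i)) = ρ →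
      ∃ (q : Fin (m ^ 2 * n ^ 2) → ℝ) (φ : Fin (m ^ 2 * n ^ 2) → (Fin m × Fin n) → ℂ),
        (∀ i, 0 ≤ q i) ∧ (∀ i, star (φ i) ⬝ᵥ φ i = 1) ∧
        (∑ i, (q i : ℂ) • vecState (φ i)) = ρ ∧
        ∑ i, q i * vnEntropy (ptrace2 (vecState (φ i))) ≤
          ∑ i, p i * vnEntropy (ptrace2 (vecState (ψ i))) := by
  intro k
  induction k using Nat.strong_induction_on with
  | _ k IH =>
  intro p ψ hp hψ hsum
  by_cases hkN : k ≤ m ^ 2 * n ^ 2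
  · -- pad with zeros
    obtain ⟨d0⟩ := hne
    have hψ0unit : star (fun j => if j = d0 then (1:ℂ) else 0) ⬝ᵥ
        (fun j => if j = d0 then (1:ℂ) else 0) = 1 := by
      simp [dotProduct, apply_ite, mul_ite, ite_mul]
    refine ⟨fun i => if h : (i : ℕ) < k then p ⟨i, h⟩ else 0,
            fun i => if h : (i : ℕ) < k then ψ ⟨i, h⟩ else
              (fun j => if j = d0 then (1:ℂ) else 0), ?_, ?_, ?_, ?_⟩
    · intro i; dsimp only; split
      · exact hp _
      · exact le_refl 0
    · intro i; dsimp only; split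
      · exact hψ _
      · exact hψ0unit
    · rw [← hsum]
      exact pad_sum hkN _ _ (fun i hi => by simp only [dif_pos hi])
        (fun i hi => by simp only [dif_neg hi, Complex.ofReal_zero, zero_smul])
    · refine le_of_eq (pad_sum hkN _ _ (fun i hi => by simp only [dif_pos hi])
        (fun i hi => by simp only [dif_neg hi, zero_mul]))
  · -- too many members: find a dependence and drop one member
    push_neg at hkN
    rcases k with _ | k'
    · omega
    have hcard : Fintype.card (Fin m × Fin n) ^ 2 < k' + 1 := by
      simpa [Fintype.card_prod, Fintype.card_fin, mul_pow] using hkN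
    obtain ⟨c₀, hc₀ne, hc₀dep⟩ := herm_dep hcard (fun i => vecState (ψ i))
      (fun i => vecState_isHermitian _)
    have htr : ∑ i, c₀ i = 0 := by
      have h1 := congrArg Matrix.trace hc₀dep
      rw [Matrix.trace_sum] at h1
      have h2 : ∀ i : Fin (k'+1), (c₀ i • vecState (ψ i)).trace = (c₀ i : ℂ) := by
        intro i
        rw [Matrix.trace_smul, trace_vecState, hψ i]
        simp [Complex.real_smul]
      rw [Finset.sum_congr rfl fun i _ => h2 i] at h1
      have : ((∑ i, c₀ i : ℝ) : ℂ) = 0 := by push_cast; simpa using h1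
      exact_mod_cast this
    set Sv : Fin (k'+1) → ℝ := fun i => vnEntropy (ptrace2 (vecState (ψ i))) with hSv
    obtain ⟨c, hcne, hcdep, hctr, hcS⟩ :
        ∃ c : Fin (k'+1) → ℝ, (∃ i, c i ≠ 0) ∧ (∑ i, c i • vecState (ψ i) = 0) ∧
          (∑ i, c i = 0) ∧ (∑ i, c i * Sv i ≤ 0) := by
      rcases le_or_gt (∑ i, c₀ i * Sv i) 0 with h | h
      · exact ⟨c₀, hc₀ne, hc₀dep, htr, h⟩
      · refine ⟨-c₀, ?_, ?_, ?_, ?_⟩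
        · obtain ⟨i, hi⟩ := hc₀ne; exact ⟨i, by simpa using hi⟩
        · simp only [Pi.neg_apply, neg_smul, Finset.sum_neg_distrib, hc₀dep, neg_zero]
        · simp [htr]
        · simp only [Pi.neg_apply, neg_mul, Finset.sum_neg_distrib]; linarith
    have hneg : ∃ i, c i < 0 := by
      by_contra hno
      push_neg at hno
      obtain ⟨i, hi⟩ := hcne
      exact hi ((Finset.sum_eq_zero_iff_of_nonneg (fun j _ => hno j)).mp hctr i
        (Finset.mem_univ i))
    have hFne : (Finset.univ.filter (fun i => c i < 0)).Nonempty := by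
      obtain ⟨i, hi⟩ := hneg
      exact ⟨i, Finset.mem_filter.mpr ⟨Finset.mem_univ i, hi⟩⟩
    set t := (Finset.univ.filter (fun i => c i < 0)).inf' hFne (fun i => p i / (-c i))
      with ht
    have ht0 : 0 ≤ t := by
      apply Finset.le_inf'
      intro i hi
      have hci : c i < 0 := (Finset.mem_filter.mp hi).2
      exact div_nonneg (hp i) (by linarith)
    set q : Fin (k'+1) → ℝ := fun i => p i + t * c i with hq
    have hq0 : ∀ i, 0 ≤ q i := by
      intro i
      rcases le_or_gt 0 (c i) with h | h
      · have h2 := mul_nonneg ht0 h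
        have h3 := hp i
        show 0 ≤ p i + t * c i
        linarith
      · have hiF : i ∈ Finset.univ.filter (fun i => c i < 0) :=
          Finset.mem_filter.mpr ⟨Finset.mem_univ i, h⟩
        have h1 : t ≤ p i / (-c i) := Finset.inf'_le _ hiF
        have h2 : t * (-c i) ≤ p i := (le_div_iff₀ (by linarith)).mp h1
        show 0 ≤ p i + t * c i
        nlinarith
    obtain ⟨i0, hi0F, hi0⟩ := Finset.exists_mem_eq_inf' hFne (fun i => p i / (-c i))
    have hci0 : c i0 < 0 := (Finset.mem_filter.mp hi0F).2
    have hqi0 : q i0 = 0 := by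
      have hne0 : c i0 ≠ 0 := ne_of_lt hci0
      have heq : t = p i0 / (-c i0) := by rw [ht, hi0]
      show p i0 + t * c i0 = 0
      rw [heq]
      field_simp
      ring
    have hcdepC : ∑ i, (c i : ℂ) • vecState (ψ i) = 0 := by
      rw [← hcdep]
      exact Finset.sum_congr rfl fun i _ => (real_smul_mat _ _).symm
    have hqsum : ∑ i, (q i : ℂ) • vecState (ψ i) = ρ := by
      have hterm : ∀ i : Fin (k'+1), ((q i : ℝ) : ℂ) • vecState (ψ i)
          = (p i : ℂ) • vecState (ψ i) + (t : ℂ) • ((c i : ℂ) • vecState (ψ i)) := by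
        intro i
        rw [smul_smul, ← add_smul]
        congr 1
        simp only [hq]
        push_cast
        ring
      rw [Finset.sum_congr rfl fun i _ => hterm i, Finset.sum_add_distrib,
        ← Finset.smul_sum, hcdepC, smul_zero, add_zero, hsum]
    have hqS : ∑ i, q i * Sv i ≤ ∑ i, p i * Sv i := by
      have hsplit : ∑ i, q i * Sv i = ∑ i, p i * Sv i + t * ∑ i, c i * Sv i := by
        rw [Finset.mul_sum, ← Finset.sum_add_distrib]
        refine Finset.sum_congr rfl fun i _ => ?_
        simp only [hq]
        ring
      rw [hsplit]
      nlinarith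
    have hsum' : ∑ j : Fin k',
        (q (i0.succAbove j) : ℂ) • vecState (ψ (i0.succAbove j)) = ρ := by
      have h1 := Fin.sum_univ_succAbove (fun i => (q i : ℂ) • vecState (ψ i)) i0
      rw [hqsum, hqi0] at h1
      simpa using h1.symm
    have hS' : ∑ j : Fin k', q (i0.succAbove j) * Sv (i0.succAbove j)
        = ∑ i, q i * Sv i := by
      have h1 := Fin.sum_univ_succAbove (fun i => q i * Sv i) i0
      rw [hqi0] at h1
      simpa using h1.symm
    obtain ⟨q', φ', h1, h2, h3, h4⟩ := IH k' (Nat.lt_succ_self k')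
      (fun j => q (i0.succAbove j)) (fun j => ψ (i0.succAbove j))
      (fun j => hq0 _) (fun j => hψ _) hsum'
    refine ⟨q', φ', h1, h2, h3, ?_⟩
    calc ∑ i, q' i * vnEntropy (ptrace2 (vecState (φ' i)))
        ≤ ∑ j : Fin k', q (i0.succAbove j) * Sv (i0.succAbove j) := h4
      _ = ∑ i, q i * Sv i := hS'
      _ ≤ ∑ i, p i * Sv i := hqS

lemma sInf_eq_of (S₁ S₂ : Set ℝ) (hsub : S₂ ⊆ S₁)
    (hred : ∀ x ∈ S₁, ∃ y ∈ S₂, y ≤ x) : sInf S₁ = sInf S₂ := by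
  rcases S₁.eq_empty_or_nonempty with h | h
  · have h2 : S₂ = ∅ := Set.eq_empty_of_subset_empty (h ▸ hsub)
    rw [h, h2]
  · obtain ⟨x, hx⟩ := h
    obtain ⟨y, hy, _⟩ := hred x hx
    by_cases hb : BddBelow S₁
    · have hb2 : BddBelow S₂ := hb.mono hsub
      apply le_antisymm
      · exact csInf_le_csInf hb ⟨y, hy⟩ hsub
      · refine le_csInf ⟨x, hx⟩ fun z hz => ?_
        obtain ⟨w, hw, hwz⟩ := hred z hz
        exact (csInf_le hb2 hw).trans hwz
    · have hb2 : ¬ BddBelow S₂ := by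
        rintro ⟨b, hbb⟩
        exact hb ⟨b, fun z hz => by
          obtain ⟨w, hw, hwz⟩ := hred z hz
          exact (hbb hw).trans hwz⟩
      rw [Real.sInf_of_not_bddBelow hb, Real.sInf_of_not_bddBelow hb2]

end EofAux

/-- The infimum defining the entanglement of formation is attained
already over ensembles with (at most) `m²n²` members. -/
theorem eof_eq_inf_fixed_ensemble_size (m n : ℕ)
    (ρ : Matrix (Fin m × Fin n) (Fin m × Fin n) ℂ) (hρ : IsState ρ) :
    EoF ρ = sInf {x : ℝ | ∃ (p : Fin (m ^ 2 * n ^ 2) → ℝ)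
        (ψ : Fin (m ^ 2 * n ^ 2) → Fin m × Fin n → ℂ),
      (∀ i, 0 ≤ p i) ∧ (∀ i, star (ψ i) ⬝ᵥ ψ i = 1) ∧
      (∑ i, (p i : ℂ) • vecState (ψ i)) = ρ ∧
      x = ∑ i, p i * vnEntropy (ptrace2 (vecState (ψ i)))} := by
  have hne : Nonempty (Fin m × Fin n) := by
    by_contra h
    rw [not_nonempty_iff] at h
    have h1 := hρ.2
    rw [Matrix.trace] at h1
    simp [Finset.univ_eq_empty] at h1
  rw [EoF]
  apply EofAux.sInf_eq_of
  · rintro x ⟨p, ψ, h1, h2, h3, h4⟩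
    exact ⟨m ^ 2 * n ^ 2, p, ψ, h1, h2, h3, h4⟩
  · rintro x ⟨k, p, ψ, h1, h2, h3, h4⟩
    obtain ⟨q, φ, g1, g2, g3, g4⟩ := EofAux.reduce m n hne ρ k p ψ h1 h2 h3
    exact ⟨_, ⟨q, φ, g1, g2, g3, rfl⟩, by rw [h4]; exact g4⟩
end

section
/- Let A_1,…,A_l be d'×d complex matrices with Σ_k A_k* A_k = I_d, and let Φ(X) = Σ_k A_k X A_k*. Then the constrained Holevo capacity ρ ↦ χ_Φ(ρ) is concave on states: for all states ρ₁, ρ₂ on ℂ^d and all t ∈ [0,1], χ_Φ(tρ₁ + (1−t)ρ₂) ≥ t χ_Φ(ρ₁) + (1−t) χ_Φ(ρ₂). -/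
open scoped Kronecker ComplexOrder Matrix

noncomputable section

/-- The channel determined by Kraus operators `A k`. -/
def krausMap {l d d' : ℕ} (A : Fin l → Matrix (Fin d') (Fin d) ℂ)
    (X : Matrix (Fin d) (Fin d) ℂ) : Matrix (Fin d') (Fin d') ℂ :=
  ∑ k, A k * X * (A k)ᴴ

/-- The constrained Holevo capacity `χ_Φ(ρ)`. -/
def constrainedHolevo {l d d' : ℕ} (A : Fin l → Matrix (Fin d') (Fin d) ℂ)
    (ρ : Matrix (Fin d) (Fin d) ℂ) : ℝ :=
  vnEntropy (krausMap A ρ) -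
    sInf {x : ℝ | ∃ (k : ℕ) (p : Fin k → ℝ) (ψ : Fin k → Fin d → ℂ),
      (∀ i, 0 ≤ p i) ∧ (∀ i, star (ψ i) ⬝ᵥ ψ i = 1) ∧
      (∑ i, (p i : ℂ) • vecState (ψ i)) = ρ ∧
      x = ∑ i, p i * vnEntropy (krausMap A (vecState (ψ i)))}

/-! ### Auxiliary lemmas -/

private lemma aux_jensen {n : Type*} [Fintype n] (w μ : n → ℝ) (hw : ∀ i, 0 ≤ w i)
    (hw1 : ∑ i, w i = 1) (hμ : ∀ i, 0 ≤ μ i) :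
    ∑ i, w i * Real.negMulLog (μ i) ≤ Real.negMulLog (∑ i, w i * μ i) := by
  have := Real.concaveOn_negMulLog.le_map_sum (t := Finset.univ) (w := w) (p := μ)
    (fun i _ => hw i) hw1 (fun i _ => hμ i)
  simpa [smul_eq_mul] using this

private lemma aux_ds {n : Type*} [Fintype n] (B : n → n → ℝ) (hB0 : ∀ j i, 0 ≤ B j i)
    (hrow : ∀ j, ∑ i, B j i = 1) (hcol : ∀ i, ∑ j, B j i = 1)
    (μ : n → ℝ) (hμ : ∀ i, 0 ≤ μ i) :
    ∑ i, Real.negMulLog (μ i) ≤ ∑ j, Real.negMulLog (∑ i, B j i * μ i) := by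
  calc ∑ i, Real.negMulLog (μ i) = ∑ i, (∑ j, B j i) * Real.negMulLog (μ i) := by
        simp [hcol]
    _ = ∑ j, ∑ i, B j i * Real.negMulLog (μ i) := by
        rw [Finset.sum_comm]; simp [Finset.sum_mul]
    _ ≤ ∑ j, Real.negMulLog (∑ i, B j i * μ i) :=
        Finset.sum_le_sum fun j _ => aux_jensen (B j) μ (hB0 j) (hrow j) hμ

private lemma aux_trace_eig {n : Type*} [Fintype n] [DecidableEq n] {A : Matrix n n ℂ}
    (hA : A.IsHermitian) : A.trace = ∑ i, (hA.eigenvalues i : ℂ) := by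
  conv_lhs => rw [hA.spectral_theorem, Unitary.conjStarAlgAut_apply]
  rw [Matrix.trace_mul_cycle, Unitary.coe_star_mul_self, Matrix.one_mul,
    Matrix.trace_diagonal]
  rfl

private lemma entropy_le_diag {n : Type*} [Fintype n] [DecidableEq n] (U : Matrix n n ℂ)
    (hU : U ∈ Matrix.unitaryGroup n ℂ) {ρ : Matrix n n ℂ} (hρ : ρ.PosSemidef) :
    ∃ c : n → ℝ, (∀ j, 0 ≤ c j) ∧ (∀ j, ((star U) * ρ * U) j j = (c j : ℂ)) ∧
      vnEntropy ρ ≤ ∑ j, Real.negMulLog (c j) := by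
  have hh := hρ.1
  set W : Matrix n n ℂ := (hh.eigenvectorUnitary : Matrix n n ℂ) with hW
  set V : Matrix n n ℂ := (star U) * W with hV
  have hVmem : V ∈ Matrix.unitaryGroup n ℂ :=
    mul_mem (Unitary.star_mem hU) hh.eigenvectorUnitary.2
  set μ : n → ℝ := hh.eigenvalues with hμdef
  have hμ0 : ∀ i, 0 ≤ μ i := hρ.eigenvalues_nonneg
  set B : n → n → ℝ := fun j i => Complex.normSq (V j i) with hB
  refine ⟨fun j => ∑ i, B j i * μ i, ?_, ?_, ?_⟩
  · intro j
    exact Finset.sum_nonneg fun i _ => mul_nonneg (Complex.normSq_nonneg _) (hμ0 i)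
  · intro j
    have hρeq : ρ = W * Matrix.diagonal (RCLike.ofReal ∘ μ) * (star W) := hh.spectral_theorem
    have : (star U) * ρ * U = V * Matrix.diagonal (RCLike.ofReal ∘ μ) * (star V) := by
      rw [hρeq, hV]
      simp only [Matrix.star_mul, star_star]
      noncomm_ring
    rw [this]
    rw [Matrix.mul_apply]
    push_cast
    refine Finset.sum_congr rfl fun i _ => ?_
    rw [Matrix.mul_diagonal]
    simp only [Matrix.star_apply, hB, Complex.star_def]
    rw [mul_right_comm, Complex.mul_conj]
    simp [Function.comp_apply, mul_comm]
  · have hrow : ∀ j, ∑ i, B j i = 1 := by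
      intro j
      have h1 : (V * star V) j j = 1 := by
        rw [Matrix.mem_unitaryGroup_iff.mp hVmem]; simp
      rw [Matrix.mul_apply] at h1
      have : ((∑ i, B j i : ℝ) : ℂ) = 1 := by
        rw [← h1]; push_cast
        exact Finset.sum_congr rfl fun i _ => by
          simp [hB, Matrix.star_apply, Complex.star_def, Complex.mul_conj]
      exact_mod_cast this
    have hcol : ∀ i, ∑ j, B j i = 1 := by
      intro i
      have h1 : ((star V) * V) i i = 1 := by
        rw [Matrix.mem_unitaryGroup_iff'.mp hVmem]; simp
      rw [Matrix.mul_apply] at h1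
      have : ((∑ j, B j i : ℝ) : ℂ) = 1 := by
        rw [← h1]; push_cast
        exact Finset.sum_congr rfl fun j _ => by
          simp [hB, Matrix.star_apply, Complex.star_def, mul_comm, Complex.mul_conj]
      exact_mod_cast this
    have : vnEntropy ρ = ∑ i, Real.negMulLog (μ i) := by
      rw [vnEntropy, dif_pos hh]
    rw [this]
    exact aux_ds B (fun j i => Complex.normSq_nonneg _) hrow hcol μ hμ0

private lemma vnEntropy_concave' {n : Type*} [Fintype n] [DecidableEq n]
    {ρ₁ ρ₂ : Matrix n n ℂ}
    (h₁ : ρ₁.PosSemidef) (h₂ : ρ₂.PosSemidef) (t : ℝ) (ht0 : 0 ≤ t) (ht1 : t ≤ 1) :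
    t * vnEntropy ρ₁ + (1 - t) * vnEntropy ρ₂ ≤
      vnEntropy ((t : ℂ) • ρ₁ + ((1 - t : ℝ) : ℂ) • ρ₂) := by
  set σ := (t : ℂ) • ρ₁ + ((1 - t : ℝ) : ℂ) • ρ₂ with hσ
  have hσh : σ.IsHermitian := by
    unfold Matrix.IsHermitian
    simp [hσ, Matrix.conjTranspose_add, Matrix.conjTranspose_smul, h₁.1.eq, h₂.1.eq,
      Complex.star_def, Complex.conj_ofReal]
  set U : Matrix n n ℂ := (hσh.eigenvectorUnitary : Matrix n n ℂ) with hU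
  obtain ⟨c₁, hc₁0, hc₁d, hc₁e⟩ := entropy_le_diag U hσh.eigenvectorUnitary.2 h₁
  obtain ⟨c₂, hc₂0, hc₂d, hc₂e⟩ := entropy_le_diag U hσh.eigenvectorUnitary.2 h₂
  have hev : ∀ j, hσh.eigenvalues j = t * c₁ j + (1 - t) * c₂ j := by
    intro j
    have hd := hσh.conjStarAlgAut_star_eigenvectorUnitary
    rw [Unitary.conjStarAlgAut_star_apply] at hd
    have h1 : (star U * σ * U) j j = ((hσh.eigenvalues j : ℝ) : ℂ) := by
      rw [hd]; simp [Matrix.diagonal_apply_eq]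
    have h2 : (star U * σ * U) j j =
        (t : ℂ) * ((star U * ρ₁ * U) j j) + ((1 - t : ℝ) : ℂ) * ((star U * ρ₂ * U) j j) := by
      rw [hσ]
      simp [Matrix.mul_add, Matrix.add_mul, Matrix.mul_smul, Matrix.smul_mul,
        Matrix.add_apply, Matrix.smul_apply, smul_eq_mul]
    rw [h1, hc₁d, hc₂d] at h2
    have : ((hσh.eigenvalues j : ℝ) : ℂ) = ((t * c₁ j + (1 - t) * c₂ j : ℝ) : ℂ) := by
      rw [h2]; push_cast; ring
    exact_mod_cast this
  have hent : vnEntropy σ = ∑ j, Real.negMulLog (hσh.eigenvalues j) := by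
    rw [vnEntropy, dif_pos hσh]
  have hjen : ∀ j, t * Real.negMulLog (c₁ j) + (1 - t) * Real.negMulLog (c₂ j) ≤
      Real.negMulLog (hσh.eigenvalues j) := by
    intro j
    rw [hev j]
    have := Real.concaveOn_negMulLog.2 (Set.mem_Ici.mpr (hc₁0 j)) (Set.mem_Ici.mpr (hc₂0 j))
      ht0 (sub_nonneg.mpr ht1) (by ring : t + (1 - t) = 1)
    simpa [smul_eq_mul] using this
  calc t * vnEntropy ρ₁ + (1 - t) * vnEntropy ρ₂
      ≤ t * (∑ j, Real.negMulLog (c₁ j)) + (1 - t) * (∑ j, Real.negMulLog (c₂ j)) := by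
        nlinarith [mul_le_mul_of_nonneg_left hc₁e ht0,
          mul_le_mul_of_nonneg_left hc₂e (by linarith : (0:ℝ) ≤ 1 - t)]
    _ = ∑ j, (t * Real.negMulLog (c₁ j) + (1 - t) * Real.negMulLog (c₂ j)) := by
        rw [Finset.sum_add_distrib, Finset.mul_sum, Finset.mul_sum]
    _ ≤ ∑ j, Real.negMulLog (hσh.eigenvalues j) := Finset.sum_le_sum fun j _ => hjen j
    _ = vnEntropy σ := hent.symm

private lemma vecState_posSemidef' {α : Type*} [Fintype α] [DecidableEq α] (ψ : α → ℂ) :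
    (vecState ψ).PosSemidef := by
  have : vecState ψ = (Matrix.of fun (_ : Unit) j => star (ψ j))ᴴ *
      (Matrix.of fun (_ : Unit) j => star (ψ j)) := by
    ext i j
    simp [vecState, Matrix.mul_apply, Matrix.conjTranspose_apply, mul_comm]
  rw [this]
  exact Matrix.posSemidef_conjTranspose_mul_self _

private lemma vecState_trace' {α : Type*} [Fintype α] (ψ : α → ℂ)
    (hψ : (star ψ) ⬝ᵥ ψ = 1) : (vecState ψ).trace = 1 := by
  rw [← hψ]
  simp [Matrix.trace, vecState, Matrix.diag, dotProduct, mul_comm]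

private lemma krausMap_isState {l d d' : ℕ} (A : Fin l → Matrix (Fin d') (Fin d) ℂ)
    (hA : ∑ k, (A k)ᴴ * A k = 1) {ρ : Matrix (Fin d) (Fin d) ℂ} (hρ : IsState ρ) :
    IsState (krausMap A ρ) := by
  constructor
  · rw [krausMap]
    exact Finset.sum_induction _ (fun M : Matrix (Fin d') (Fin d') ℂ => M.PosSemidef)
      (fun a b ha hb => ha.add hb)
      Matrix.PosSemidef.zero (fun k _ => hρ.1.mul_mul_conjTranspose_same (A k))
  · rw [krausMap, Matrix.trace_sum]
    have : ∀ k, (A k * ρ * (A k)ᴴ).trace = ((A k)ᴴ * (A k) * ρ).trace := by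
      intro k
      rw [Matrix.trace_mul_cycle, Matrix.mul_assoc]
    rw [Finset.sum_congr rfl fun k _ => this k, ← Matrix.trace_sum, ← Finset.sum_mul, hA,
      Matrix.one_mul, hρ.2]

private lemma vnEntropy_nonneg' {n : Type*} [Fintype n] [DecidableEq n] {ρ : Matrix n n ℂ}
    (hρ : IsState ρ) : 0 ≤ vnEntropy ρ := by
  have hh := hρ.1.1
  rw [vnEntropy, dif_pos hh]
  have hsum : ∑ i, hh.eigenvalues i = 1 := by
    have h0 := aux_trace_eig hh
    rw [hρ.2] at h0
    have : ((∑ i, hh.eigenvalues i : ℝ) : ℂ) = 1 := by push_cast; rw [← h0]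
    exact_mod_cast this
  refine Finset.sum_nonneg fun i _ => Real.negMulLog_nonneg (hρ.1.eigenvalues_nonneg i) ?_
  calc hh.eigenvalues i ≤ ∑ j, hh.eigenvalues j :=
        Finset.single_le_sum (fun j _ => hρ.1.eigenvalues_nonneg j) (Finset.mem_univ i)
    _ = 1 := hsum

/-- The ensemble set appearing in `constrainedHolevo`. -/
private def ensSet {l d d' : ℕ} (A : Fin l → Matrix (Fin d') (Fin d) ℂ)
    (ρ : Matrix (Fin d) (Fin d) ℂ) : Set ℝ :=
  {x : ℝ | ∃ (k : ℕ) (p : Fin k → ℝ) (ψ : Fin k → Fin d → ℂ),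
      (∀ i, 0 ≤ p i) ∧ (∀ i, star (ψ i) ⬝ᵥ ψ i = 1) ∧
      (∑ i, (p i : ℂ) • vecState (ψ i)) = ρ ∧
      x = ∑ i, p i * vnEntropy (krausMap A (vecState (ψ i)))}

private lemma constrainedHolevo_eq {l d d' : ℕ} (A : Fin l → Matrix (Fin d') (Fin d) ℂ)
    (ρ : Matrix (Fin d) (Fin d) ℂ) :
    constrainedHolevo A ρ = vnEntropy (krausMap A ρ) - sInf (ensSet A ρ) := rfl

private lemma ensSet_nonneg {l d d' : ℕ} (A : Fin l → Matrix (Fin d') (Fin d) ℂ)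
    (hA : ∑ k, (A k)ᴴ * A k = 1) (ρ : Matrix (Fin d) (Fin d) ℂ) :
    ∀ x ∈ ensSet A ρ, (0:ℝ) ≤ x := by
  rintro x ⟨k, p, ψ, hp, hψ, -, rfl⟩
  refine Finset.sum_nonneg fun i _ => mul_nonneg (hp i) ?_
  exact vnEntropy_nonneg'
    (krausMap_isState A hA ⟨vecState_posSemidef' _, vecState_trace' _ (hψ i)⟩)

private lemma ensSet_nonempty {l d d' : ℕ} (A : Fin l → Matrix (Fin d') (Fin d) ℂ)
    {ρ : Matrix (Fin d) (Fin d) ℂ} (hρ : IsState ρ) : (ensSet A ρ).Nonempty := by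
  have hh := hρ.1.1
  set W : Matrix (Fin d) (Fin d) ℂ := (hh.eigenvectorUnitary : Matrix (Fin d) (Fin d) ℂ)
    with hW
  refine ⟨_, d, hh.eigenvalues, fun i => fun j => W j i, fun i => hρ.1.eigenvalues_nonneg i,
    ?_, ?_, rfl⟩
  · intro i
    have h1 : ((star W) * W) i i = 1 := by
      rw [Matrix.mem_unitaryGroup_iff'.mp hh.eigenvectorUnitary.2]; simp
    rw [Matrix.mul_apply] at h1
    rw [← h1]
    simp [dotProduct, Matrix.star_apply]
  · ext j m
    have h0 : ρ = W * Matrix.diagonal (RCLike.ofReal ∘ hh.eigenvalues) * (star W) :=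
      hh.spectral_theorem
    have h2 := congrFun (congrFun h0 j) m
    rw [h2, Matrix.mul_apply]
    rw [show (∑ i, ((hh.eigenvalues i : ℂ)) • vecState (fun j => W j i)) j m
        = ∑ i, (hh.eigenvalues i : ℂ) * (W j i * star (W m i)) from by
      simp [Matrix.sum_apply, vecState, Matrix.smul_apply, smul_eq_mul]]
    refine Finset.sum_congr rfl fun i _ => ?_
    simp only [Matrix.mul_diagonal, Matrix.star_apply, Function.comp_apply]
    rw [show ((RCLike.ofReal (hh.eigenvalues i)) : ℂ) = ((hh.eigenvalues i : ℝ) : ℂ) from rfl]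
    ring

/-- The constrained Holevo capacity `ρ ↦ χ_Φ(ρ)` is concave on
states. -/
theorem constrainedHolevo_concave (l d d' : ℕ)
    (A : Fin l → Matrix (Fin d') (Fin d) ℂ) (hA : ∑ k, (A k)ᴴ * A k = 1)
    (ρ₁ ρ₂ : Matrix (Fin d) (Fin d) ℂ) (h₁ : IsState ρ₁) (h₂ : IsState ρ₂)
    (t : ℝ) (ht₀ : 0 ≤ t) (ht₁ : t ≤ 1) :
    t * constrainedHolevo A ρ₁ + (1 - t) * constrainedHolevo A ρ₂ ≤
      constrainedHolevo A ((t : ℂ) • ρ₁ + ((1 - t : ℝ) : ℂ) • ρ₂) := by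
  have ht₂ : (0:ℝ) ≤ 1 - t := by linarith
  set σ := (t : ℂ) • ρ₁ + ((1 - t : ℝ) : ℂ) • ρ₂ with hσdef
  have hlin : krausMap A σ = (t : ℂ) • krausMap A ρ₁ + ((1 - t : ℝ) : ℂ) • krausMap A ρ₂ := by
    simp only [hσdef, krausMap, Matrix.mul_add, Matrix.add_mul, Matrix.mul_smul,
      Matrix.smul_mul, Finset.sum_add_distrib, Finset.smul_sum]
  have hE : t * vnEntropy (krausMap A ρ₁) + (1 - t) * vnEntropy (krausMap A ρ₂) ≤
      vnEntropy (krausMap A σ) := by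
    rw [hlin]
    exact vnEntropy_concave' (krausMap_isState A hA h₁).1 (krausMap_isState A hA h₂).1
      t ht₀ ht₁
  have hBdd : ∀ ρ' : Matrix (Fin d) (Fin d) ℂ, BddBelow (ensSet A ρ') :=
    fun ρ' => ⟨0, fun x hx => ensSet_nonneg A hA ρ' x hx⟩
  have hmem : ∀ x₁ ∈ ensSet A ρ₁, ∀ x₂ ∈ ensSet A ρ₂,
      t * x₁ + (1 - t) * x₂ ∈ ensSet A σ := by
    rintro x₁ ⟨k₁, p, ψ, hp, hψ, hs₁, rfl⟩ x₂ ⟨k₂, q, φ, hq, hφ, hs₂, rfl⟩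
    refine ⟨k₁ + k₂, Fin.append (fun i => t * p i) (fun i => (1 - t) * q i),
      Fin.append ψ φ, ?_, ?_, ?_, ?_⟩
    · intro i
      refine Fin.addCases (fun i => ?_) (fun i => ?_) i
      · simpa [Fin.append_left] using mul_nonneg ht₀ (hp i)
      · simpa [Fin.append_right] using mul_nonneg ht₂ (hq i)
    · intro i
      refine Fin.addCases (fun i => ?_) (fun i => ?_) i
      · simpa [Fin.append_left] using hψ i
      · simpa [Fin.append_right] using hφ i
    · rw [Fin.sum_univ_add]
      simp only [Fin.append_left, Fin.append_right]
      rw [hσdef, ← hs₁, ← hs₂, Finset.smul_sum, Finset.smul_sum]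
      congr 1
      · exact Finset.sum_congr rfl fun i _ => by
          rw [show ((t * p i : ℝ) : ℂ) = (t : ℂ) * ((p i : ℝ) : ℂ) from by push_cast; ring,
            ← smul_smul]
      · exact Finset.sum_congr rfl fun i _ => by
          rw [show (((1 - t) * q i : ℝ) : ℂ) = ((1 - t : ℝ) : ℂ) * ((q i : ℝ) : ℂ) from by
            push_cast; ring, ← smul_smul]
    · rw [Fin.sum_univ_add]
      simp only [Fin.append_left, Fin.append_right]
      rw [Finset.mul_sum, Finset.mul_sum]
      congr 1 <;> exact Finset.sum_congr rfl fun i _ => by ring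
  have hI : sInf (ensSet A σ) ≤
      t * sInf (ensSet A ρ₁) + (1 - t) * sInf (ensSet A ρ₂) := by
    refine le_of_forall_pos_le_add fun ε hε => ?_
    obtain ⟨x₁, hx₁, hx₁'⟩ := Real.lt_sInf_add_pos (ensSet_nonempty A h₁) (half_pos hε)
    obtain ⟨x₂, hx₂, hx₂'⟩ := Real.lt_sInf_add_pos (ensSet_nonempty A h₂) (half_pos hε)
    have hle := csInf_le (hBdd σ) (hmem x₁ hx₁ x₂ hx₂)
    have e1 : t * x₁ ≤ t * (sInf (ensSet A ρ₁) + ε/2) :=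
      mul_le_mul_of_nonneg_left hx₁'.le ht₀
    have e2 : (1 - t) * x₂ ≤ (1 - t) * (sInf (ensSet A ρ₂) + ε/2) :=
      mul_le_mul_of_nonneg_left hx₂'.le ht₂
    nlinarith [hε.le]
  simp only [constrainedHolevo_eq]
  linarith [hE, hI]


end
end
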